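/- Let q be a rational number with 0 < q < 1 such that q⁻¹ is not an integer, and let M be the submonoid of (ℚ, +) generated by {qⁿ : n ∈ ℕ₀}. Then M is atomic with set of atoms exactly {qⁿ : n ∈ ℕ₀}, and M does not satisfy the ACCP: writing q = a/b with a, b coprime positive integers, (a qⁿ + M)_{n≥1} is an ascending chain of principal ideals of M that does not stabilize. -/

import Mathlib

/-- A subset `S` of an abelian group is a submonoid if it contains `0`
and is closed under addition. -/
def IsSubmonoidSet {G : Type*} [AddCommGroup G] (S : Set G) : Prop :=
  (0 : G) ∈ S ∧ ∀ a ∈ S, ∀ b ∈ S, a + b ∈ S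

/-- `a` is an atom of the (sub)monoid `S`: it belongs to `S`, is not invertible in `S`,
and whenever `a = b + c` with `b, c ∈ S`, one of `b`, `c` is invertible in `S`. -/
def IsAtomIn {G : Type*} [AddCommGroup G] (S : Set G) (a : G) : Prop :=
  a ∈ S ∧ -a ∉ S ∧ ∀ b ∈ S, ∀ c ∈ S, a = b + c → (-b ∈ S ∨ -c ∈ S)

/-- `S` is atomic: every non-invertible element of `S` is a finite sum of atoms of `S`. -/
def IsAtomicSet {G : Type*} [AddCommGroup G] (S : Set G) : Prop :=
  ∀ a ∈ S, -a ∉ S → ∃ l : Multiset G, (∀ x ∈ l, IsAtomIn S x) ∧ l.sum = a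

/-- The principal ideal `b + S` of the (sub)monoid `S`. -/
def setIdeal {G : Type*} [AddCommGroup G] (S : Set G) (b : G) : Set G :=
  {x | ∃ m ∈ S, x = b + m}

/-- `S` satisfies the ACCP: every ascending chain of principal ideals of `S` stabilizes. -/
def SatisfiesACCPSet {G : Type*} [AddCommGroup G] (S : Set G) : Prop :=
  ∀ b : ℕ → G, (∀ n, b n ∈ S) →
    (∀ n, setIdeal S (b n) ⊆ setIdeal S (b (n + 1))) →
    ∃ N, ∀ n, N ≤ n → setIdeal S (b n) = setIdeal S (b N)

/-- The submonoid of `(ℚ, +)` generated by the powers `{qⁿ : n ∈ ℕ₀}`. -/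
def powMonoid (q : ℚ) : Set ℚ := ↑(AddSubmonoid.closure {x : ℚ | ∃ n : ℕ, x = q ^ n})

lemma mem_powMonoid_iff {q x : ℚ} :
    x ∈ powMonoid q ↔ ∃ l : Multiset ℕ, (l.map (q ^ ·)).sum = x := by
  constructor
  · intro hx
    induction hx using AddSubmonoid.closure_induction with
    | mem y hy => obtain ⟨n, rfl⟩ := hy; exact ⟨{n}, by simp⟩
    | zero => exact ⟨0, by simp⟩
    | add x y _ _ hx hy =>
      obtain ⟨l1, rfl⟩ := hx; obtain ⟨l2, rfl⟩ := hy
      exact ⟨l1 + l2, by simp⟩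
  · rintro ⟨l, rfl⟩
    exact AddSubmonoid.multiset_sum_mem _ _ (by
      intro x hx
      obtain ⟨n, _, rfl⟩ := Multiset.mem_map.mp hx
      exact AddSubmonoid.subset_closure ⟨n, rfl⟩)

lemma zero_mem_powMonoid (q : ℚ) : (0 : ℚ) ∈ powMonoid q :=
  mem_powMonoid_iff.mpr ⟨0, by simp⟩

lemma add_mem_powMonoid {q x y : ℚ} (hx : x ∈ powMonoid q) (hy : y ∈ powMonoid q) :
    x + y ∈ powMonoid q := by
  obtain ⟨l1, rfl⟩ := mem_powMonoid_iff.mp hx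
  obtain ⟨l2, rfl⟩ := mem_powMonoid_iff.mp hy
  exact mem_powMonoid_iff.mpr ⟨l1 + l2, by simp⟩

lemma sum_nonneg' {q : ℚ} (h0 : 0 < q) (l : Multiset ℕ) : 0 ≤ (l.map (q ^ ·)).sum := by
  apply Multiset.sum_nonneg
  intro x hx
  obtain ⟨n, _, rfl⟩ := Multiset.mem_map.mp hx
  exact (pow_pos h0 n).le

lemma sum_pos' {q : ℚ} (h0 : 0 < q) {l : Multiset ℕ} (hl : l ≠ 0) :
    0 < (l.map (q ^ ·)).sum := by
  obtain ⟨k, hk⟩ := Multiset.exists_mem_of_ne_zero hl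
  obtain ⟨t, rfl⟩ := Multiset.exists_cons_of_mem hk
  simp only [Multiset.map_cons, Multiset.sum_cons]
  have := sum_nonneg' h0 t
  have := pow_pos h0 k
  linarith

lemma term_le_sum {q : ℚ} (h0 : 0 < q) {l : Multiset ℕ} {k : ℕ} (hk : k ∈ l) :
    q ^ k ≤ (l.map (q ^ ·)).sum := by
  obtain ⟨t, rfl⟩ := Multiset.exists_cons_of_mem hk
  simp only [Multiset.map_cons, Multiset.sum_cons]
  have := sum_nonneg' h0 t
  linarith

lemma powMonoid_nonneg {q x : ℚ} (h0 : 0 < q) (hx : x ∈ powMonoid q) : 0 ≤ x := by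
  obtain ⟨l, rfl⟩ := mem_powMonoid_iff.mp hx
  exact sum_nonneg' h0 l

lemma inv_not_mem {q : ℚ} {a b : ℕ} (ha2 : 2 ≤ a) (hb : 0 < b)
    (hab : Nat.Coprime a b) (hq : q = (a : ℚ) / (b : ℚ)) (l : Multiset ℕ) :
    (l.map (q ^ ·)).sum ≠ q⁻¹ := by
  intro h
  have ha0 : (a : ℚ) ≠ 0 := by positivity
  have hb0 : (b : ℚ) ≠ 0 := by positivity
  set N := l.sum with hN
  have hbound : ∀ j ∈ l, j ≤ N := by
    intro j hj
    obtain ⟨t, rfl⟩ := Multiset.exists_cons_of_mem hj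
    simp [hN]
  have key : ∀ j ∈ l, ((a ^ (j+1) * b ^ (N - j) : ℕ) : ℚ) = q ^ j * ((a : ℚ) * (b : ℚ) ^ N) := by
    intro j hj
    have hbj : (b : ℚ) ^ (N - j) * (b : ℚ) ^ j = (b : ℚ) ^ N := by
      rw [← pow_add, Nat.sub_add_cancel (hbound j hj)]
    push_cast
    rw [hq, div_pow, ← hbj]
    field_simp
    ring
  have hcast : (((l.map (fun j => a ^ (j+1) * b ^ (N - j))).sum : ℕ) : ℚ)
      = ((b : ℚ)) ^ (N + 1) := by
    rw [Nat.cast_multiset_sum, Multiset.map_map]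
    simp only [Function.comp_def]
    rw [Multiset.map_congr rfl (fun j hj => key j hj)]
    have : (l.map (fun j => q ^ j * ((a : ℚ) * (b : ℚ) ^ N))).sum
        = (l.map (q ^ ·)).sum * ((a : ℚ) * (b : ℚ) ^ N) := Multiset.sum_map_mul_right
    rw [this, h, hq]
    rw [inv_div]
    field_simp
    ring
  have hnat : (l.map (fun j => a ^ (j+1) * b ^ (N - j))).sum = b ^ (N + 1) := by
    have := hcast
    rw [show ((b : ℚ)) ^ (N + 1) = ((b ^ (N+1) : ℕ) : ℚ) by push_cast; ring] at this
    exact_mod_cast this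
  have hdvd : a ∣ b ^ (N + 1) := by
    rw [← hnat]
    apply Multiset.dvd_sum
    intro x hx
    obtain ⟨j, _, rfl⟩ := Multiset.mem_map.mp hx
    exact ⟨a ^ j * b ^ (N - j), by ring⟩
  have := (hab.pow_right (N + 1)).eq_one_of_dvd hdvd
  omega

lemma rep_unique {q : ℚ} (h0 : 0 < q) (h1 : q < 1)
    (hB : ∀ l : Multiset ℕ, (l.map (q ^ ·)).sum ≠ q⁻¹)
    {l : Multiset ℕ} {n : ℕ} (h : (l.map (q ^ ·)).sum = q ^ n) : l = {n} := by
  have hge : ∀ k ∈ l, n ≤ k := by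
    intro k hk
    by_contra hlt
    push_neg at hlt
    have h2 : q ^ n < q ^ k := pow_lt_pow_right_of_lt_one₀ h0 h1 hlt
    have h3 := term_le_sum h0 hk
    rw [h] at h3; linarith
  rcases Nat.lt_or_ge (l.count n) 1 with hc | hc
  · exfalso
    have hnm : n ∉ l := by
      intro hmem; have := Multiset.count_pos.mpr hmem; omega
    have hge1 : ∀ k ∈ l, n + 1 ≤ k := by
      intro k hk
      have := hge k hk
      rcases Nat.eq_or_lt_of_le this with rfl | h'
      · exact absurd hk hnm
      · omega
    apply hB (l.map (fun k => k - (n+1)))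
    have hqn1 : q ^ (n+1) ≠ 0 := pow_ne_zero _ h0.ne'
    apply mul_left_cancel₀ hqn1
    rw [Multiset.map_map]
    have : (l.map (fun k => q ^ (k - (n+1)))).sum * q ^ (n+1)
        = (l.map (fun k => q ^ (k - (n+1)) * q ^ (n+1))).sum := Multiset.sum_map_mul_right.symm
    have h2 : (l.map (fun k => q ^ (k - (n+1)) * q ^ (n+1))).sum = (l.map (q ^ ·)).sum := by
      apply congrArg
      apply Multiset.map_congr rfl
      intro k hk
      rw [← pow_add, Nat.sub_add_cancel (hge1 k hk)]
    have h3 : q ^ (n+1) * q⁻¹ = q ^ n := by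
      rw [pow_succ]
      field_simp
    calc q ^ (n+1) * ((l.map ((fun k => q ^ k) ∘ fun k => k - (n + 1))).sum)
        = (l.map (fun k => q ^ (k - (n+1)))).sum * q ^ (n+1) := by
          rw [mul_comm]; rfl
      _ = (l.map (q ^ ·)).sum := by rw [this, h2]
      _ = q ^ n := h
      _ = q ^ (n+1) * q⁻¹ := h3.symm
  · have hmem : n ∈ l := Multiset.count_pos.mp (by omega)
    obtain ⟨t, rfl⟩ := Multiset.exists_cons_of_mem hmem
    have ht : t = 0 := by
      by_contra htne
      have h4 := sum_pos' h0 htne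
      simp only [Multiset.map_cons, Multiset.sum_cons] at h
      linarith
    rw [ht]; rfl

lemma atom_iff {q : ℚ} (h0 : 0 < q) (h1 : q < 1)
    (hB : ∀ l : Multiset ℕ, (l.map (q ^ ·)).sum ≠ q⁻¹) (x : ℚ) :
    IsAtomIn (powMonoid q) x ↔ ∃ n : ℕ, x = q ^ n := by
  constructor
  · rintro ⟨hx, hninv, _⟩
    obtain ⟨l, rfl⟩ := mem_powMonoid_iff.mp hx
    rename_i hsplit
    have hne : l ≠ 0 := by
      rintro rfl
      simp only [Multiset.map_zero, Multiset.sum_zero, neg_zero] at hninv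
      exact hninv (zero_mem_powMonoid q)
    obtain ⟨k, hk⟩ := Multiset.exists_mem_of_ne_zero hne
    obtain ⟨t, rfl⟩ := Multiset.exists_cons_of_mem hk
    have ht : t = 0 := by
      by_contra htne
      simp only [Multiset.map_cons, Multiset.sum_cons] at hsplit
      have hqk : q ^ k ∈ powMonoid q := mem_powMonoid_iff.mpr ⟨{k}, by simp⟩
      have hts : (t.map (q ^ ·)).sum ∈ powMonoid q := mem_powMonoid_iff.mpr ⟨t, rfl⟩
      rcases hsplit (q ^ k) hqk ((t.map (q ^ ·)).sum) hts rfl with hneg | hneg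
      · have := powMonoid_nonneg h0 hneg
        have := pow_pos h0 k
        linarith
      · have := powMonoid_nonneg h0 hneg
        have := sum_pos' h0 htne
        linarith
    rw [ht]
    exact ⟨k, by simp⟩
  · rintro ⟨n, rfl⟩
    refine ⟨mem_powMonoid_iff.mpr ⟨{n}, by simp⟩, ?_, ?_⟩
    · intro hneg
      have := powMonoid_nonneg h0 hneg
      have := pow_pos h0 n
      linarith
    · intro c hc d hd heq
      obtain ⟨l1, rfl⟩ := mem_powMonoid_iff.mp hc
      obtain ⟨l2, rfl⟩ := mem_powMonoid_iff.mp hd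
      have hsum : ((l1 + l2).map (q ^ ·)).sum = q ^ n := by
        simp [heq.symm]
      have huniq := rep_unique h0 h1 hB hsum
      have hcard : Multiset.card l1 + Multiset.card l2 = 1 := by
        have := congrArg Multiset.card huniq
        simpa using this
      rcases Nat.eq_zero_or_pos (Multiset.card l1) with hz | hp
      · left
        rw [Multiset.card_eq_zero.mp hz]
        simpa using zero_mem_powMonoid q
      · right
        have : Multiset.card l2 = 0 := by omega
        rw [Multiset.card_eq_zero.mp this]
        simpa using zero_mem_powMonoid q

lemma nat_mul_pow_mem {q : ℚ} (k m : ℕ) : (k : ℚ) * q ^ m ∈ powMonoid q :=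
  mem_powMonoid_iff.mpr ⟨Multiset.replicate k m, by
    simp [Multiset.map_replicate, Multiset.sum_replicate, nsmul_eq_mul]⟩

/-- For a rational `0 < q < 1` with `q⁻¹` not an integer, the monoid
generated by `{qⁿ : n ∈ ℕ₀}` is atomic with atoms exactly `{qⁿ : n ∈ ℕ₀}`, and it does not
satisfy the ACCP: writing `q = a/b` with `a, b` coprime positive integers,
`(a qⁿ + M)_{n ≥ 1}` is an ascending chain of principal ideals that does not stabilize. -/
theorem powMonoid_atomic_not_ACCP (q : ℚ) (h0 : 0 < q) (h1 : q < 1)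
    (hinv : ¬ ∃ k : ℤ, q⁻¹ = (k : ℚ)) (a b : ℕ) (ha : 0 < a) (hb : 0 < b)
    (hab : Nat.Coprime a b) (hq : q = (a : ℚ) / (b : ℚ)) :
    IsAtomicSet (powMonoid q) ∧
    {x : ℚ | IsAtomIn (powMonoid q) x} = {x : ℚ | ∃ n : ℕ, x = q ^ n} ∧
    (∀ n : ℕ, 1 ≤ n → (a : ℚ) * q ^ n ∈ powMonoid q ∧
      setIdeal (powMonoid q) ((a : ℚ) * q ^ n) ⊂
        setIdeal (powMonoid q) ((a : ℚ) * q ^ (n + 1))) ∧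
    ¬ SatisfiesACCPSet (powMonoid q) := by
  have hb0 : (b : ℚ) ≠ 0 := by positivity
  have ha2 : 2 ≤ a := by
    by_contra hlt
    have ha1 : a = 1 := by omega
    apply hinv
    refine ⟨(b : ℤ), ?_⟩
    rw [hq, ha1]
    push_cast
    rw [one_div, inv_inv]
  have hB : ∀ l : Multiset ℕ, (l.map (q ^ ·)).sum ≠ q⁻¹ := inv_not_mem ha2 hb hab hq
  have hlt : a < b := by
    have : (a : ℚ) < (b : ℚ) := by
      rw [hq] at h1
      rw [div_lt_one (by positivity)] at h1
      exact h1
    exact_mod_cast this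
  have hbq : ∀ n : ℕ, (b : ℚ) * q ^ (n + 1) = (a : ℚ) * q ^ n := by
    intro n
    rw [pow_succ, hq]
    field_simp
  have hdiff : ∀ n : ℕ, (a : ℚ) * q ^ n - (a : ℚ) * q ^ (n + 1)
      = ((b - a : ℕ) : ℚ) * q ^ (n + 1) := by
    intro n
    rw [Nat.cast_sub hlt.le, ← hbq n]
    ring
  -- part 3
  have part3 : ∀ n : ℕ, 1 ≤ n → (a : ℚ) * q ^ n ∈ powMonoid q ∧
      setIdeal (powMonoid q) ((a : ℚ) * q ^ n) ⊂
        setIdeal (powMonoid q) ((a : ℚ) * q ^ (n + 1)) := by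
    intro n _
    refine ⟨nat_mul_pow_mem a n, ?_⟩
    rw [Set.ssubset_def]
    constructor
    · rintro x ⟨m, hm, rfl⟩
      refine ⟨((b - a : ℕ) : ℚ) * q ^ (n + 1) + m,
        add_mem_powMonoid (nat_mul_pow_mem _ _) hm, ?_⟩
      have := hdiff n
      linarith
    · intro hsub
      have hmem : (a : ℚ) * q ^ (n + 1) ∈ setIdeal (powMonoid q) ((a : ℚ) * q ^ (n + 1)) :=
        ⟨0, zero_mem_powMonoid q, by rw [add_zero]⟩
      obtain ⟨m, hm, heq⟩ := hsub hmem
      have hm0 := powMonoid_nonneg h0 hm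
      have hqlt : q ^ (n + 1) < q ^ n := pow_lt_pow_right_of_lt_one₀ h0 h1 (Nat.lt_succ_self n)
      have ha1 : (1 : ℚ) ≤ (a : ℚ) := by exact_mod_cast ha
      nlinarith
  refine ⟨?_, ?_, part3, ?_⟩
  · intro x hx _
    obtain ⟨l, rfl⟩ := mem_powMonoid_iff.mp hx
    refine ⟨l.map (q ^ ·), ?_, rfl⟩
    intro y hy
    obtain ⟨k, _, rfl⟩ := Multiset.mem_map.mp hy
    exact (atom_iff h0 h1 hB _).mpr ⟨k, rfl⟩
  · ext x
    exact atom_iff h0 h1 hB x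
  · intro hacc
    obtain ⟨N, hN⟩ := hacc (fun n => (a : ℚ) * q ^ (n + 1))
      (fun n => nat_mul_pow_mem a (n + 1))
      (fun n => (part3 (n + 1) (by omega)).2.subset)
    have hEq := hN (N + 1) (Nat.le_succ N)
    have hSS := (part3 (N + 1) (by omega)).2
    rw [hEq] at hSS
    exact hSS.ne rfl
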